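/- A self-dual completely positive trace-preserving map M on n×n complex matrices admits a Kraus representation with Hermitian Kraus operators: there exist Hermitian matrices A_s with M(X) = Σ_s A_s X A_s and Σ_s A_s² = I. -/

import Mathlib

open scoped ComplexOrder

open Matrix in
/-- The extension `M ⊗ id_k` of a linear map `M` on `n × n` matrices, acting blockwise on
`(n·k) × (n·k)` matrices indexed by `Fin n × Fin k`. -/
noncomputable def blockExtend {n : ℕ}
    (M : Matrix (Fin n) (Fin n) ℂ →ₗ[ℂ] Matrix (Fin n) (Fin n) ℂ) (k : ℕ)
    (X : Matrix (Fin n × Fin k) (Fin n × Fin k) ℂ) :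
    Matrix (Fin n × Fin k) (Fin n × Fin k) ℂ :=
  fun p q => M (fun i j => X (i, p.2) (j, q.2)) p.1 q.1

open Matrix in
/-- A self-dual completely positive trace-preserving map admits a Kraus representation
with Hermitian Kraus operators `A s` satisfying `∑ s, (A s)² = 1`. -/
theorem self_dual_CPTP_hermitian_kraus {n : ℕ}
    (M : Matrix (Fin n) (Fin n) ℂ →ₗ[ℂ] Matrix (Fin n) (Fin n) ℂ)
    (hcp : ∀ k : ℕ, ∀ X : Matrix (Fin n × Fin k) (Fin n × Fin k) ℂ,
      X.PosSemidef → (blockExtend M k X).PosSemidef)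
    (htr : ∀ X : Matrix (Fin n) (Fin n) ℂ, (M X).trace = X.trace)
    (hsd : ∀ X Y : Matrix (Fin n) (Fin n) ℂ, ((M X)ᴴ * Y).trace = (Xᴴ * M Y).trace) :
    ∃ (m : ℕ) (A : Fin m → Matrix (Fin n) (Fin n) ℂ),
      (∀ s, (A s).IsHermitian)
      ∧ (∀ X : Matrix (Fin n) (Fin n) ℂ, M X = ∑ s, A s * X * A s)
      ∧ ∑ s, A s * A s = 1 := by
  classical
  -- the (unnormalized) maximally entangled state
  set v : Fin n × Fin n → ℂ := fun p => if p.1 = p.2 then 1 else 0 with hv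
  set Ent : Matrix (Fin n × Fin n) (Fin n × Fin n) ℂ :=
    Matrix.of (fun p q => v p * star (v q)) with hEntdef
  have hEnt : Ent.PosSemidef := by
    have h : Ent = (Matrix.of (fun p (_ : Fin 1) => v p)) *
        (Matrix.of (fun p (_ : Fin 1) => v p))ᴴ := by
      ext p q
      simp [hEntdef, Matrix.mul_apply, Matrix.conjTranspose_apply]
    rw [h]
    exact Matrix.posSemidef_self_mul_conjTranspose _
  -- the Choi matrix
  set C : Matrix (Fin n × Fin n) (Fin n × Fin n) ℂ := blockExtend M n Ent with hCdef
  have hC : C.PosSemidef := hcp n Ent hEnt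
  have hCE : ∀ i a j b : Fin n, C (i, a) (j, b) = M (Matrix.single a b 1) i j := by
    intro i a j b
    have h : (fun i' j' => Ent (i', a) (j', b)) = Matrix.single a b (1 : ℂ) := by
      ext i' j'
      simp only [hEntdef, Matrix.of_apply, hv, Matrix.single]
      by_cases h1 : a = i' <;> by_cases h2 : b = j' <;>
        simp [h1, h2, eq_comm]
    simp only [hCdef, blockExtend, h]
  -- entrywise formula for M via the Choi matrix
  have hM : ∀ (X : Matrix (Fin n) (Fin n) ℂ) (i j : Fin n),
      M X i j = ∑ a, ∑ b, X a b * C (i, a) (j, b) := by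
    intro X i j
    conv_lhs => rw [matrix_eq_sum_single X]
    simp only [map_sum, Matrix.sum_apply]
    refine Finset.sum_congr rfl fun a _ => Finset.sum_congr rfl fun b _ => ?_
    rw [hCE]
    have h : Matrix.single a b (X a b) = X a b • Matrix.single a b (1 : ℂ) := by
      rw [Matrix.smul_single, smul_eq_mul, mul_one]
    rw [h, LinearMap.map_smul]
    simp [Matrix.smul_apply, smul_eq_mul]
  -- trace formula
  have htrf : ∀ A B : Matrix (Fin n) (Fin n) ℂ,
      (Aᴴ * B).trace = ∑ p, ∑ q, star (A q p) * B q p := by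
    intro A B
    simp [Matrix.trace, Matrix.diag, Matrix.mul_apply, Matrix.conjTranspose_apply]
  -- the key symmetry of the Choi matrix coming from self-duality
  have hCsd : ∀ i a j b : Fin n, C (i, a) (j, b) = star (C (a, i) (b, j)) := by
    intro i a j b
    have h := hsd (Matrix.single i j 1) (Matrix.single a b 1)
    rw [htrf, htrf] at h
    have hL : ∑ p, ∑ q, star ((M (Matrix.single i j 1)) q p) *
        (Matrix.single a b (1:ℂ)) q p = star ((M (Matrix.single i j 1)) a b) := by
      simp [Matrix.single, Finset.sum_comm (γ := Fin n), ite_and,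
        Finset.sum_ite_eq, Finset.sum_ite_eq']
    have hR : ∑ p, ∑ q, star ((Matrix.single i j (1:ℂ)) q p) *
        (M (Matrix.single a b 1)) q p = (M (Matrix.single a b 1)) i j := by
      simp [Matrix.single, apply_ite (starRingEnd ℂ), ite_mul, zero_mul, one_mul,
        ite_and, Finset.sum_ite_eq, Finset.sum_ite_eq']
    rw [hL, hR] at h
    rw [hCE, hCE, ← h]
  have hCswap : ∀ p q : Fin n × Fin n, C (q.2, q.1) (p.2, p.1) = C p q := by
    intro p q
    have h1 : C (p.1, p.2) (q.1, q.2) = star (C (p.2, p.1) (q.2, q.1)) := hCsd _ _ _ _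
    have h2 : star (C (p.2, p.1) (q.2, q.1)) = C (q.2, q.1) (p.2, p.1) := hC.1.apply _ _
    calc C (q.2, q.1) (p.2, p.1) = star (C (p.2, p.1) (q.2, q.1)) := h2.symm
      _ = C (p.1, p.2) (q.1, q.2) := h1.symm
      _ = C p q := by rw [Prod.mk.eta, Prod.mk.eta]
  -- the square root of the Choi matrix and its symmetry
  open scoped MatrixOrder in
  set S : Matrix (Fin n × Fin n) (Fin n × Fin n) ℂ := CFC.sqrt C with hSdef
  open scoped MatrixOrder in
  have hS : S.PosSemidef := Matrix.nonneg_iff_posSemidef.mp (CFC.sqrt_nonneg C)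
  open scoped MatrixOrder in
  have hSS : S * S = C := CFC.sqrt_mul_sqrt_self C hC.nonneg
  set σ : (Fin n × Fin n) ≃ (Fin n × Fin n) := Equiv.prodComm (Fin n) (Fin n) with hσ
  have hS'eq : ((S.submatrix σ σ))ᵀ = S := by
    have hps : ((S.submatrix σ σ))ᵀ.PosSemidef := (hS.submatrix σ).transpose
    have hsq : ((S.submatrix σ σ))ᵀ ^ 2 = C := by
      rw [pow_two, ← Matrix.transpose_mul, Matrix.submatrix_mul_equiv, hSS]
      ext p q
      exact hCswap p q
    have hsq' : (S.submatrix σ σ)ᵀ * (S.submatrix σ σ)ᵀ = C := by rw [← pow_two]; exact hsq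
    open scoped MatrixOrder in
    exact (CFC.sqrt_unique hsq' hps.nonneg).symm
  have hSsymm : ∀ p q : Fin n × Fin n, star (S p q) = S (p.2, p.1) (q.2, q.1) := by
    intro p q
    have h1 : star (S p q) = S q p := hS.1.apply q p
    have h2 : S q p = ((S.submatrix σ σ))ᵀ q p := by rw [hS'eq]
    rw [h1, h2, Matrix.transpose_apply, Matrix.submatrix_apply]
    rfl
  -- columns of S
  set w : (Fin n × Fin n) → ((Fin n × Fin n) → ℂ) := fun p q => S q p with hw_def
  have hCd : ∀ p q : Fin n × Fin n, C p q = ∑ r, w r p * star (w r q) := by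
    intro p q
    rw [← hSS]
    rw [Matrix.mul_apply]
    refine Finset.sum_congr rfl fun r _ => ?_
    rw [hw_def]
    dsimp only
    rw [hS.1.apply r q]
  have hw : ∀ a b i j : Fin n, star (w (a, b) (i, j)) = w (b, a) (j, i) := by
    intro a b i j
    rw [hw_def]
    dsimp only
    exact hSsymm (i, j) (a, b)
  -- the Hermitian Kraus operators (indexed by `Fin 2 × Fin n × Fin n`)
  set A' : Fin 2 × Fin n × Fin n → Matrix (Fin n) (Fin n) ℂ := fun t =>
    Matrix.of fun i j =>
      if t.1 = 0 then (w (t.2.1, t.2.2) (i, j) + w (t.2.2, t.2.1) (i, j)) / 2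
      else Complex.I * (w (t.2.1, t.2.2) (i, j) - w (t.2.2, t.2.1) (i, j)) / 2
    with hA'def
  have hherm : ∀ t, (A' t).IsHermitian := by
    rintro ⟨c, a, b⟩
    ext i j
    rw [Matrix.conjTranspose_apply]
    simp only [hA'def, Matrix.of_apply]
    split_ifs with h
    · rw [star_div₀, star_add, hw, hw]
      simp [add_comm]
    · rw [star_div₀, star_mul', star_sub, hw, hw]
      simp only [Complex.star_def, Complex.conj_I, map_ofNat]
      ring
  have hkey : ∀ i a j b : Fin n,
      ∑ t : Fin 2 × Fin n × Fin n, A' t i a * star (A' t j b) = C (i, a) (j, b) := by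
    intro i a j b
    rw [Fintype.sum_prod_type, Fin.sum_univ_two, ← Finset.sum_add_distrib]
    have step : ∀ p : Fin n × Fin n,
        A' (0, p) i a * star (A' (0, p) j b) + A' (1, p) i a * star (A' (1, p) j b)
        = (w p (i, a) * star (w p (j, b))
            + w (p.2, p.1) (i, a) * star (w (p.2, p.1) (j, b))) / 2 := by
      rintro ⟨a', b'⟩
      have e0 : (((0 : Fin 2), ((a' : Fin n), (b' : Fin n))).1 = 0) = True := by simp
      have e1 : (((1 : Fin 2), ((a' : Fin n), (b' : Fin n))).1 = 0) = False := by simp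
      simp only [hA'def, Matrix.of_apply, e0, e1, if_true, if_false]
      simp only [star_div₀, star_add, star_sub, star_mul', Complex.star_def,
        Complex.conj_I, map_ofNat]
      ring_nf
      simp only [Complex.I_sq]
      ring
    simp only [step]
    have hswap : ∑ p : Fin n × Fin n, w (p.2, p.1) (i, a) * star (w (p.2, p.1) (j, b))
        = ∑ p : Fin n × Fin n, w p (i, a) * star (w p (j, b)) :=
      Fintype.sum_equiv (Equiv.prodComm (Fin n) (Fin n)) _ _ (fun p => rfl)
    rw [← Finset.sum_div, Finset.sum_add_distrib, hswap, ← two_mul,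
      mul_div_cancel_left₀ _ (two_ne_zero), hCd]
  -- Kraus representation
  have hrep : ∀ X : Matrix (Fin n) (Fin n) ℂ,
      M X = ∑ t : Fin 2 × Fin n × Fin n, A' t * X * A' t := by
    intro X
    ext i j
    have hterm : ∀ t, (A' t * X * A' t) i j
        = ∑ a, ∑ b, X a b * (A' t i a * star (A' t j b)) := by
      intro t
      rw [Matrix.mul_apply]
      rw [Finset.sum_congr rfl fun b _ => by
        rw [Matrix.mul_apply, Finset.sum_mul]]
      rw [Finset.sum_comm]
      refine Finset.sum_congr rfl fun a _ => Finset.sum_congr rfl fun b _ => ?_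
      rw [← (hherm t).apply b j]
      ring
    have hR : (∑ t : Fin 2 × Fin n × Fin n, A' t * X * A' t) i j
        = ∑ a, ∑ b, X a b * C (i, a) (j, b) := by
      rw [Matrix.sum_apply]
      simp only [hterm]
      rw [Finset.sum_comm]
      refine Finset.sum_congr rfl fun a _ => ?_
      rw [Finset.sum_comm]
      refine Finset.sum_congr rfl fun b _ => ?_
      rw [← Finset.mul_sum, hkey]
    rw [hM X i j, hR]
  -- normalization
  have hsum : ∑ t : Fin 2 × Fin n × Fin n, A' t * A' t = 1 := by
    ext a b
    rw [Matrix.sum_apply]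
    have hterm : ∀ t, (A' t * A' t) a b = ∑ i, A' t i b * star (A' t i a) := by
      intro t
      rw [Matrix.mul_apply]
      refine Finset.sum_congr rfl fun i _ => ?_
      rw [← (hherm t).apply a i]
      ring
    simp only [hterm]
    rw [Finset.sum_comm]
    have h1 : ∀ i : Fin n, ∑ t : Fin 2 × Fin n × Fin n,
        A' t i b * star (A' t i a) = C (i, b) (i, a) := fun i => hkey i b i a
    simp only [h1]
    have h2 : ∑ i, C (i, b) (i, a) = (M (Matrix.single b a 1)).trace := by
      simp [Matrix.trace, Matrix.diag, hCE]
    rw [h2, htr]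
    simp [Matrix.trace, Matrix.diag, Matrix.single, Matrix.one_apply, ite_and,
      Finset.sum_ite_eq, eq_comm]
  -- repackage the index type as `Fin (2 * (n * n))`
  let e : (Fin 2 × Fin n × Fin n) ≃ Fin (2 * (n * n)) :=
    (Equiv.prodCongr (Equiv.refl (Fin 2)) finProdFinEquiv).trans finProdFinEquiv
  refine ⟨2 * (n * n), fun s => A' (e.symm s), fun s => hherm _, fun X => ?_, ?_⟩
  · rw [hrep X]
    exact (Fintype.sum_equiv e.symm _ _ fun s => rfl).symm
  · rw [← hsum]
    exact Fintype.sum_equiv e.symm _ _ fun s => rfl
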